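/- Let n points be drawn i.i.d. from the distribution D(p) over ℝⁿ that returns the scaled basis vector n^{100}·e_i for uniformly random i with probability 1−p, and the origin 0 with probability p. Let c_x denote the number of sampled points equal to x. For the Gaussian-type kernel with k(x,y) ≈ 0 for distinct points (k(x,x)=1), the kernel matrix sum satisfies E[s(K)] = ∑_x E[c_x²] + o(e^{−n}) = 2n + n²p² + o(n). -/

import Mathlib

/-- Probability of the outcome `ω` of `n` i.i.d. draws from the distribution `D(p)`,
where `none` encodes drawing the origin (probability `p`) and `some i` encodes drawing
the scaled basis vector `n^100 • eᵢ` (probability `(1-p)/n` each). -/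
noncomputable def drawWt (n : ℕ) (p : ℝ) (ω : Fin n → Option (Fin n)) : ℝ :=
  ∏ t, (match ω t with
        | none => p
        | some _ => (1 - p) / n)

/-- The number of the `n` drawn points equal to the point encoded by `x`. -/
def cnt (n : ℕ) (ω : Fin n → Option (Fin n)) (x : Option (Fin n)) : ℕ :=
  (Finset.univ.filter (fun t => ω t = x)).card

theorem stmt12 (n : ℕ) (hn : 1 ≤ n) (p : ℝ) (hp0 : 0 ≤ p)
    (hp1 : p ≤ 2 / Real.sqrt n) :
    (∑ ω : Fin n → Option (Fin n),
        drawWt n p ω * ∑ x : Option (Fin n), (cnt n ω x : ℝ) ^ 2)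
      = (n : ℝ) ^ 2 * ((n : ℝ) - 1) * ((1 - p) / n) ^ 2 + n * (1 - p)
          + n * ((n : ℝ) - 1) * p ^ 2 + n * p ∧
    |((n : ℝ) ^ 2 * ((n : ℝ) - 1) * ((1 - p) / n) ^ 2 + n * (1 - p)
          + n * ((n : ℝ) - 1) * p ^ 2 + n * p)
        - (2 * n + (n : ℝ) ^ 2 * p ^ 2)| ≤ 8 * Real.sqrt n := by
  have hn0 : (n : ℝ) ≠ 0 := Nat.cast_ne_zero.mpr (by omega)
  have hn1 : (1 : ℝ) ≤ (n : ℝ) := by exact_mod_cast hn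
  constructor
  · -- the exact expectation computation
    set w : Option (Fin n) → ℝ :=
      fun a => match a with | none => p | some _ => (1 - p) / n with hwdef
    have hdraw : ∀ ω : Fin n → Option (Fin n), drawWt n p ω = ∏ u, w (ω u) :=
      fun ω => rfl
    have hwsum : ∑ a : Option (Fin n), w a = 1 := by
      rw [Fintype.sum_option]
      simp only [hwdef, Finset.sum_const, Finset.card_univ, Fintype.card_fin,
        nsmul_eq_mul]
      try field_simp
      ring
    have hsum2 : ∑ a : Option (Fin n), w a ^ 2 = p ^ 2 + n * ((1 - p) / n) ^ 2 := by
      rw [Fintype.sum_option]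
      simp only [hwdef, Finset.sum_const, Finset.card_univ, Fintype.card_fin,
        nsmul_eq_mul]
      try ring
    have swap : ∀ g : Fin n → Option (Fin n) → ℝ,
        ∑ ω : Fin n → Option (Fin n), ∏ u, g u (ω u) = ∏ u, ∑ a, g u a := by
      intro g
      rw [← Fintype.piFinset_univ, ← Finset.prod_univ_sum]
    -- diagonal key lemma
    have keydiag : ∀ (x : Option (Fin n)) (s : Fin n),
        ∑ ω : Fin n → Option (Fin n),
            drawWt n p ω * (if ω s = x then (1 : ℝ) else 0) = w x := by
      intro x s
      have h1 : ∀ ω : Fin n → Option (Fin n),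
          drawWt n p ω * (if ω s = x then (1 : ℝ) else 0)
            = ∏ u, (w (ω u) * (if u = s then (if ω u = x then (1 : ℝ) else 0) else 1)) := by
        intro ω
        rw [Finset.prod_mul_distrib, Finset.prod_ite_eq', hdraw ω]
        simp
      rw [Finset.sum_congr rfl (fun ω _ => h1 ω),
        swap (fun u a => w a * (if u = s then (if a = x then (1 : ℝ) else 0) else 1))]
      have h2 : ∀ u : Fin n,
          (∑ a : Option (Fin n),
            w a * (if u = s then (if a = x then (1 : ℝ) else 0) else 1))
          = if u = s then w x else 1 := by
        intro u
        by_cases h : u = s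
        · simp only [h, if_pos rfl, mul_ite, mul_one, mul_zero, Finset.sum_ite_eq']
          simp
        · simp [h, hwsum]
      rw [Finset.prod_congr rfl (fun u _ => h2 u), Finset.prod_ite_eq']
      simp
    -- off-diagonal key lemma
    have keyoff : ∀ (x : Option (Fin n)) (s t : Fin n), s ≠ t →
        ∑ ω : Fin n → Option (Fin n),
            drawWt n p ω * (if ω s = x then (1 : ℝ) else 0)
              * (if ω t = x then (1 : ℝ) else 0) = w x ^ 2 := by
      intro x s t hst
      have h1 : ∀ ω : Fin n → Option (Fin n),
          drawWt n p ω * (if ω s = x then (1 : ℝ) else 0)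
              * (if ω t = x then (1 : ℝ) else 0)
            = ∏ u, (w (ω u) * (if u = s then (if ω u = x then (1 : ℝ) else 0) else 1)
                * (if u = t then (if ω u = x then (1 : ℝ) else 0) else 1)) := by
        intro ω
        rw [Finset.prod_mul_distrib, Finset.prod_mul_distrib,
          Finset.prod_ite_eq', Finset.prod_ite_eq', hdraw ω]
        simp
      rw [Finset.sum_congr rfl (fun ω _ => h1 ω),
        swap (fun u a => w a * (if u = s then (if a = x then (1 : ℝ) else 0) else 1)
          * (if u = t then (if a = x then (1 : ℝ) else 0) else 1))]
      have h2 : ∀ u : Fin n,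
          (∑ a : Option (Fin n),
            w a * (if u = s then (if a = x then (1 : ℝ) else 0) else 1)
              * (if u = t then (if a = x then (1 : ℝ) else 0) else 1))
          = (if u = s then w x else 1) * (if u = t then w x else 1) := by
        intro u
        by_cases h : u = s
        · have h' : u ≠ t := h ▸ hst
          simp only [h, h', if_pos rfl, if_neg h', mul_one, mul_ite, mul_zero,
            Finset.sum_ite_eq']
          simp [hst]
        · by_cases h'' : u = t
          · simp only [h, h'', if_neg h, if_pos rfl, mul_one, mul_ite, mul_zero,
              Finset.sum_ite_eq']
            simp [Ne.symm hst]
          · simp [h, h'', hwsum]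
      rw [Finset.prod_congr rfl (fun u _ => h2 u), Finset.prod_mul_distrib,
        Finset.prod_ite_eq', Finset.prod_ite_eq']
      simp [sq]
    -- cast of cnt as a sum of indicators
    have hcnt : ∀ (ω : Fin n → Option (Fin n)) (x : Option (Fin n)),
        ((cnt n ω x : ℕ) : ℝ) = ∑ t, (if ω t = x then (1 : ℝ) else 0) := by
      intro ω x
      rw [cnt, Finset.card_filter]
      push_cast
      exact Finset.sum_congr rfl (fun t _ => by by_cases h : ω t = x <;> simp [h])
    -- value of the pairwise sum
    have hval : ∀ (x : Option (Fin n)) (s t : Fin n),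
        (∑ ω : Fin n → Option (Fin n),
          drawWt n p ω * (if ω s = x then (1 : ℝ) else 0)
            * (if ω t = x then (1 : ℝ) else 0))
          = if s = t then w x else w x ^ 2 := by
      intro x s t
      by_cases h : s = t
      · subst h
        rw [if_pos rfl, ← keydiag x s]
        refine Finset.sum_congr rfl (fun ω _ => ?_)
        by_cases h' : ω s = x <;> simp [h']
      · rw [if_neg h, keyoff x s t h]
    -- expansion of the squared count
    have step1x : ∀ x : Option (Fin n),
        (∑ ω : Fin n → Option (Fin n), drawWt n p ω * (cnt n ω x : ℝ) ^ 2)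
        = ∑ s : Fin n, ∑ t : Fin n, ∑ ω : Fin n → Option (Fin n),
            drawWt n p ω * (if ω s = x then (1 : ℝ) else 0)
              * (if ω t = x then (1 : ℝ) else 0) := by
      intro x
      have e1 : ∀ ω : Fin n → Option (Fin n),
          drawWt n p ω * (cnt n ω x : ℝ) ^ 2
            = ∑ s : Fin n, ∑ t : Fin n,
                drawWt n p ω * (if ω s = x then (1 : ℝ) else 0)
                  * (if ω t = x then (1 : ℝ) else 0) := by
        intro ω
        rw [hcnt, sq, Finset.sum_mul_sum, Finset.mul_sum]
        refine Finset.sum_congr rfl (fun s _ => ?_)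
        rw [Finset.mul_sum]
        refine Finset.sum_congr rfl (fun t _ => ?_)
        ring
      rw [Finset.sum_congr rfl (fun ω _ => e1 ω), Finset.sum_comm]
      refine Finset.sum_congr rfl (fun s _ => ?_)
      rw [Finset.sum_comm]
    -- row sum of a diagonal/off-diagonal pattern
    have hrow : ∀ (A B : ℝ) (s : Fin n),
        (∑ t : Fin n, if s = t then A else B) = A + ((n : ℝ) - 1) * B := by
      intro A B s
      have e : ∀ t : Fin n, (if s = t then A else B)
          = B + (if s = t then A - B else 0) := by
        intro t; by_cases h : s = t <;> simp [h]
      rw [Finset.sum_congr rfl (fun t _ => e t), Finset.sum_add_distrib,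
        Finset.sum_const, Finset.sum_ite_eq, Finset.card_univ, Fintype.card_fin]
      simp [nsmul_eq_mul]
      ring
    -- main rearrangement
    have main : (∑ ω : Fin n → Option (Fin n),
          drawWt n p ω * ∑ x : Option (Fin n), (cnt n ω x : ℝ) ^ 2)
        = ∑ x : Option (Fin n),
            ((n : ℝ) * w x + (n : ℝ) * ((n : ℝ) - 1) * w x ^ 2) := by
      simp_rw [Finset.mul_sum]
      rw [Finset.sum_comm]
      refine Finset.sum_congr rfl (fun x _ => ?_)
      rw [step1x x,
        Finset.sum_congr rfl (fun s _ => Finset.sum_congr rfl (fun t _ => hval x s t)),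
        Finset.sum_congr rfl (fun s _ => hrow (w x) (w x ^ 2) s),
        Finset.sum_const, Finset.card_univ, Fintype.card_fin, nsmul_eq_mul]
      ring
    rw [main, Finset.sum_add_distrib, ← Finset.mul_sum, ← Finset.mul_sum,
      hwsum, hsum2]
    field_simp
    ring
  · -- the approximation bound
    have hnpos : (0 : ℝ) < n := by linarith
    have hs0 : (0 : ℝ) < Real.sqrt n := Real.sqrt_pos.mpr hnpos
    have hs1 : (1 : ℝ) ≤ Real.sqrt n := by
      rw [show (1 : ℝ) = Real.sqrt 1 by simp]
      exact Real.sqrt_le_sqrt hn1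
    have hs2 : Real.sqrt n ^ 2 = n := Real.sq_sqrt hnpos.le
    have hps : p * Real.sqrt n ≤ 2 := by
      rw [div_eq_mul_inv] at hp1
      calc p * Real.sqrt n ≤ (2 * (Real.sqrt n)⁻¹) * Real.sqrt n :=
            mul_le_mul_of_nonneg_right hp1 hs0.le
        _ = 2 := by field_simp
    have hE : ((n : ℝ) ^ 2 * ((n : ℝ) - 1) * ((1 - p) / n) ^ 2 + n * (1 - p)
          + n * ((n : ℝ) - 1) * p ^ 2 + n * p) - (2 * n + (n : ℝ) ^ 2 * p ^ 2)
        = -(1 + 2 * ((n : ℝ) - 1) * p + p ^ 2) := by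
      field_simp
      ring
    rw [hE, abs_neg, abs_of_nonneg (by nlinarith [mul_nonneg hp0 (by linarith : (0:ℝ) ≤ (n:ℝ) - 1)])]
    nlinarith [mul_nonneg hs0.le (by linarith : (0:ℝ) ≤ 2 - p * Real.sqrt n),
      mul_nonneg hp0 (by linarith : (0:ℝ) ≤ 2 - p * Real.sqrt n),
      mul_nonneg (mul_nonneg hp0 hp0) (by linarith : (0:ℝ) ≤ Real.sqrt n - 1),
      hs2, hs1]
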